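/- Let X be a nilpotent element of a ℚ(q)-algebra. Then exp_q(X) · exp_{q^{-1}}(−X) = 1, where exp_q(X) = Σ_{n≥0} X^n/(n)_q! with (n)_q = 1+q^2+...+q^(2n-2), and exp_{q^{-1}} is the same expression with q replaced by q^{-1}. -/

import Mathlib

noncomputable section

abbrev K : Type := RatFunc ℚ

def q : K := RatFunc.X

/-- The t-integer (n)_t = 1 + t² + ⋯ + t^(2n-2) for n ≥ 1, with (0)_t = 1;
used with t = q and t = q⁻¹. -/
def qIntAt (t : K) (n : ℕ) : K := if n = 0 then 1 else ∑ k ∈ Finset.range n, t ^ (2 * k)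

/-- The t-factorial (n)_t! = (1)_t (2)_t ⋯ (n)_t. -/
def qFactAt (t : K) : ℕ → K
  | 0 => 1
  | n + 1 => qFactAt t n * qIntAt t (n + 1)

/-- The truncated t-exponential exp_t(X) = Σ_{n<N} X^n/(n)_t!; for X nilpotent
with X^N = 0 this is the full series. -/
def qExpAt {A : Type*} [Ring A] [Algebra K A] (t : K) (X : A) (N : ℕ) : A :=
  ∑ n ∈ Finset.range N, (qFactAt t n)⁻¹ • X ^ n

lemma q_ne_zero : q ≠ 0 := RatFunc.X_ne_zero

lemma qIntAt_q_ne_zero (n : ℕ) : qIntAt q n ≠ 0 := by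
  unfold qIntAt
  split
  · exact one_ne_zero
  · rename_i hn
    intro h
    have hp : (∑ k ∈ Finset.range n, (Polynomial.X : Polynomial ℚ) ^ (2 * k)) ≠ 0 := by
      intro hp0
      have := congrArg (Polynomial.eval (1 : ℚ)) hp0
      simp [Polynomial.eval_finset_sum] at this
      exact hn this
    apply hp
    apply IsFractionRing.injective (Polynomial ℚ) K
    rw [map_sum, map_zero]
    simpa [RatFunc.algebraMap_X, q] using h

lemma qFactAt_q_ne_zero (n : ℕ) : qFactAt q n ≠ 0 := by
  induction n with
  | zero => exact one_ne_zero
  | succ k ih => exact mul_ne_zero ih (qIntAt_q_ne_zero _)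

lemma qInt_inv_rel (n : ℕ) (hn : n ≠ 0) :
    q ^ (2 * (n - 1)) * qIntAt q⁻¹ n = qIntAt q n := by
  unfold qIntAt
  rw [if_neg hn, if_neg hn, Finset.mul_sum]
  rw [← Finset.sum_range_reflect (fun k => q ^ (2 * k)) n]
  apply Finset.sum_congr rfl
  intro k hk
  rw [Finset.mem_range] at hk
  have hk' : 2 * (n - 1) = 2 * (n - 1 - k) + 2 * k := by omega
  rw [hk', pow_add, inv_pow, mul_assoc, mul_inv_cancel₀ (pow_ne_zero _ q_ne_zero), mul_one]

lemma qFact_inv_rel (m : ℕ) : q ^ (m * (m - 1)) * qFactAt q⁻¹ m = qFactAt q m := by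
  induction m with
  | zero => simp [qFactAt]
  | succ k ih =>
      have he : (k + 1) * ((k + 1) - 1) = k * (k - 1) + 2 * k := by
        cases k with
        | zero => rfl
        | succ j => simp [Nat.succ_sub_one]; ring
      show q ^ ((k + 1) * ((k + 1) - 1)) * (qFactAt q⁻¹ k * qIntAt q⁻¹ (k + 1))
        = qFactAt q k * qIntAt q (k + 1)
      rw [he, pow_add, ← ih, ← qInt_inv_rel (k + 1) (Nat.succ_ne_zero k)]
      simp only [Nat.add_sub_cancel]
      ring

lemma qFactAt_qinv_ne_zero (n : ℕ) : qFactAt q⁻¹ n ≠ 0 := by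
  intro h
  have h2 := qFact_inv_rel n
  rw [h, mul_zero] at h2
  exact qFactAt_q_ne_zero n h2.symm

lemma qFact_inv_inv (m : ℕ) :
    (qFactAt q⁻¹ m)⁻¹ = q ^ (m * (m - 1)) * (qFactAt q m)⁻¹ := by
  rw [← qFact_inv_rel m, mul_inv, ← mul_assoc,
    mul_inv_cancel₀ (pow_ne_zero _ q_ne_zero), one_mul]

lemma qInt_add (a b : ℕ) (ha : a ≠ 0) (hb : b ≠ 0) :
    qIntAt q (a + b) = qIntAt q a + q ^ (2 * a) * qIntAt q b := by
  unfold qIntAt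
  rw [if_neg (by omega), if_neg ha, if_neg hb, Finset.sum_range_add, Finset.mul_sum]
  congr 1
  apply Finset.sum_congr rfl
  intro k _
  rw [← pow_add]
  ring_nf

def cSum (s : ℕ) : K :=
  ∑ m ∈ Finset.range (s + 1),
    (-1) ^ m * q ^ (m * (m - 1)) * ((qFactAt q m)⁻¹ * (qFactAt q (s - m))⁻¹)

lemma cSum_zero : cSum 0 = 1 := by simp [cSum, qFactAt]

lemma cSum_rec (s : ℕ) :
    qIntAt q (s + 1) * cSum (s + 1) = (1 - q ^ (2 * s)) * cSum s := by
  have key : ∀ m ∈ Finset.range (s + 2),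
      qIntAt q (s + 1) *
        ((-1) ^ m * q ^ (m * (m - 1)) * ((qFactAt q m)⁻¹ * (qFactAt q (s + 1 - m))⁻¹))
      = (if m ≤ s then
          (-1) ^ m * q ^ (m * (m - 1)) * ((qFactAt q m)⁻¹ * (qFactAt q (s - m))⁻¹)
        else 0)
      + (if 1 ≤ m then
          (-1) ^ m * q ^ (m * (m - 1)) * q ^ (2 * (s + 1 - m)) *
            ((qFactAt q (m - 1))⁻¹ * (qFactAt q (s + 1 - m))⁻¹)
        else 0) := by
    intro m hm
    rw [Finset.mem_range] at hm
    have h0 : qFactAt q 0 = 1 := rfl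
    rcases Nat.eq_zero_or_pos m with rfl | hm1
    · simp only [Nat.zero_le, if_pos, if_neg (by omega : ¬ (1:ℕ) ≤ 0)]
      have hF : qFactAt q (s + 1) = qFactAt q s * qIntAt q (s + 1) := rfl
      simp only [Nat.sub_zero, pow_zero, Nat.zero_mul, one_mul, hF, mul_inv, add_zero, h0,
        inv_one]
      have h1 := qFactAt_q_ne_zero s
      have h2 := qIntAt_q_ne_zero (s + 1)
      field_simp
    · have hm1' : 1 ≤ m := hm1
      rcases Nat.lt_or_ge m (s + 1) with hms | hms
      · -- 1 ≤ m ≤ s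
        have hmle : m ≤ s := by omega
        rw [if_pos hmle, if_pos hm1']
        obtain ⟨j, rfl⟩ : ∃ j, m = j + 1 := ⟨m - 1, by omega⟩
        obtain ⟨i, rfl⟩ : ∃ i, s = j + 1 + i := ⟨s - (j + 1), by omega⟩
        have e1 : j + 1 + i + 1 - (j + 1) = i + 1 := by omega
        have e2 : j + 1 + i - (j + 1) = i := by omega
        have e3 : j + 1 - 1 = j := by omega
        have e4 : j + 1 + i + 1 = (i + 1) + (j + 1) := by omega
        rw [e1, e2, e3, e4, qInt_add _ _ (by omega) (by omega)]
        have hFm : qFactAt q (j + 1) = qFactAt q j * qIntAt q (j + 1) := rfl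
        have hFs : qFactAt q (i + 1) = qFactAt q i * qIntAt q (i + 1) := rfl
        rw [hFm, hFs]
        have n1 := qFactAt_q_ne_zero j
        have n2 := qIntAt_q_ne_zero (j + 1)
        have n3 := qFactAt_q_ne_zero i
        have n4 := qIntAt_q_ne_zero (i + 1)
        field_simp
      · -- m = s + 1
        have hm2 : m = s + 1 := by omega
        subst hm2
        rw [if_neg (by omega), if_pos (by omega)]
        have hF : qFactAt q (s + 1) = qFactAt q s * qIntAt q (s + 1) := rfl
        simp only [Nat.sub_self, Nat.add_sub_cancel, hF, zero_add, pow_zero, mul_one,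
          Nat.mul_zero, h0, inv_one]
        have h1 := qFactAt_q_ne_zero s
        have h2 := qIntAt_q_ne_zero (s + 1)
        field_simp
  have hA : ∑ m ∈ Finset.range (s + 2),
      (if m ≤ s then
        (-1) ^ m * q ^ (m * (m - 1)) * ((qFactAt q m)⁻¹ * (qFactAt q (s - m))⁻¹)
      else 0) = cSum s := by
    rw [Finset.sum_range_succ, if_neg (by omega), add_zero]
    unfold cSum
    apply Finset.sum_congr rfl
    intro m hm
    rw [Finset.mem_range] at hm
    rw [if_pos (by omega)]
  have hB : ∑ m ∈ Finset.range (s + 2),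
      (if 1 ≤ m then
        (-1) ^ m * q ^ (m * (m - 1)) * q ^ (2 * (s + 1 - m)) *
          ((qFactAt q (m - 1))⁻¹ * (qFactAt q (s + 1 - m))⁻¹)
      else 0) = -(q ^ (2 * s)) * cSum s := by
    rw [Finset.sum_range_succ', if_neg (by omega), add_zero]
    unfold cSum
    rw [Finset.mul_sum]
    apply Finset.sum_congr rfl
    intro m hm
    rw [Finset.mem_range] at hm
    rw [if_pos (by omega)]
    simp only [Nat.add_sub_cancel]
    have he : (m + 1) * m + 2 * (s + 1 - (m + 1)) = m * (m - 1) + 2 * s := by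
      cases m with
      | zero => omega
      | succ j =>
          have hss : s + 1 - (j + 1 + 1) = s - (j + 1) := by omega
          rw [hss, Nat.succ_sub_one]
          have hj : j + 1 ≤ s := by omega
          nlinarith [Nat.sub_add_cancel hj]
    have hss2 : s + 1 - (m + 1) = s - m := by omega
    rw [hss2]
    have hq : q ^ ((m + 1) * m) * q ^ (2 * (s - m)) = q ^ (m * (m - 1)) * q ^ (2 * s) := by
      rw [← pow_add, ← pow_add]
      congr 1
      omega
    rw [pow_succ]
    linear_combination (-((-1 : K) ^ m * ((qFactAt q m)⁻¹ * (qFactAt q (s - m))⁻¹))) * hq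
  have expand : cSum (s + 1) = ∑ m ∈ Finset.range (s + 2),
      (-1) ^ m * q ^ (m * (m - 1)) * ((qFactAt q m)⁻¹ * (qFactAt q (s + 1 - m))⁻¹) := rfl
  rw [expand, Finset.mul_sum, Finset.sum_congr rfl key, Finset.sum_add_distrib, hA, hB]
  ring

lemma cSum_succ_eq_zero (s : ℕ) : cSum (s + 1) = 0 := by
  induction s with
  | zero =>
      have h := cSum_rec 0
      rw [Nat.mul_zero, pow_zero, sub_self, zero_mul] at h
      rcases mul_eq_zero.mp h with h' | h'
      · exact absurd h' (qIntAt_q_ne_zero 1)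
      · exact h'
  | succ k ih =>
      have h := cSum_rec (k + 1)
      rw [ih, mul_zero] at h
      rcases mul_eq_zero.mp h with h' | h'
      · exact absurd h' (qIntAt_q_ne_zero (k + 2))
      · exact h'

/-- The antidiagonal coefficient, with the q⁻¹ factorial. -/
def eSum (s : ℕ) : K :=
  ∑ m ∈ Finset.range (s + 1), (-1) ^ m * ((qFactAt q (s - m))⁻¹ * (qFactAt q⁻¹ m)⁻¹)

lemma eSum_eq_cSum (s : ℕ) : eSum s = cSum s := by
  unfold eSum cSum
  apply Finset.sum_congr rfl
  intro m _
  rw [qFact_inv_inv]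
  ring

lemma eSum_zero : eSum 0 = 1 := by rw [eSum_eq_cSum, cSum_zero]

lemma eSum_succ (s : ℕ) : eSum (s + 1) = 0 := by
  rw [eSum_eq_cSum, cSum_succ_eq_zero]

/-- For a nilpotent element X of a ℚ(q)-algebra, exp_q(X) · exp_{q⁻¹}(−X) = 1. -/
theorem qExp_mul_qExpInv {A : Type*} [Ring A] [Algebra K A] (X : A) (N : ℕ)
    (hX : X ^ N = 0) :
    qExpAt q X N * qExpAt q⁻¹ (-X) N = 1 := by
  rcases Nat.eq_zero_or_pos N with rfl | hN
  · have h1 : (1 : A) = 0 := by simpa using hX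
    simp only [qExpAt, Finset.range_zero, Finset.sum_empty, mul_zero]
    exact h1.symm
  · set f : ℕ × ℕ → A := fun p =>
      ((-1) ^ p.2 * ((qFactAt q p.1)⁻¹ * (qFactAt q⁻¹ p.2)⁻¹)) • X ^ (p.1 + p.2) with hf
    have hterm : ∀ n m : ℕ,
        ((qFactAt q n)⁻¹ • X ^ n) * ((qFactAt q⁻¹ m)⁻¹ • (-X) ^ m) = f (n, m) := by
      intro n m
      have hneg : (-X) ^ m = ((-1 : K) ^ m) • X ^ m := by
        rw [← smul_pow, neg_one_smul]
      rw [hneg, smul_smul, smul_mul_smul_comm, ← pow_add, hf]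
      congr 1
      ring
    have step1 : qExpAt q X N * qExpAt q⁻¹ (-X) N
        = ∑ p ∈ Finset.range N ×ˢ Finset.range N, f p := by
      unfold qExpAt
      rw [Finset.sum_mul_sum, Finset.sum_product]
      exact Finset.sum_congr rfl fun n _ => Finset.sum_congr rfl fun m _ => hterm n m
    set T := (Finset.range N).biUnion (fun s => Finset.HasAntidiagonal.antidiagonal s) with hT
    have hsub : T ⊆ Finset.range N ×ˢ Finset.range N := by
      intro p hp
      simp only [hT, Finset.mem_biUnion, Finset.mem_range, Finset.HasAntidiagonal.mem_antidiagonal] at hp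
      simp only [Finset.mem_product, Finset.mem_range]
      obtain ⟨s, hs, hps⟩ := hp
      omega
    have hzero : ∀ p ∈ Finset.range N ×ˢ Finset.range N, p ∉ T → f p = 0 := by
      intro p _ hpT
      have hge : N ≤ p.1 + p.2 := by
        by_contra hlt
        apply hpT
        simp only [hT, Finset.mem_biUnion, Finset.mem_range, Finset.HasAntidiagonal.mem_antidiagonal]
        exact ⟨p.1 + p.2, by omega, rfl⟩
      have hXp : X ^ (p.1 + p.2) = 0 := by
        obtain ⟨d, hd⟩ := Nat.exists_eq_add_of_le hge
        rw [hd, pow_add, hX, zero_mul]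
      rw [hf]
      simp only [hXp, smul_zero]
    have hdisj : Set.PairwiseDisjoint ↑(Finset.range N)
        (fun s => (Finset.HasAntidiagonal.antidiagonal s : Finset (ℕ × ℕ))) := by
      intro a _ b _ hab
      simp only [Function.onFun, Finset.disjoint_left, Finset.HasAntidiagonal.mem_antidiagonal]
      intro p hp hq
      exact hab (hp ▸ hq ▸ rfl)
    have inner : ∀ s ∈ Finset.range N,
        (∑ p ∈ Finset.HasAntidiagonal.antidiagonal s, f p) = eSum s • X ^ s := by
      intro s _
      have h1 : ∀ p ∈ Finset.HasAntidiagonal.antidiagonal s, f p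
          = ((-1) ^ p.2 * ((qFactAt q p.1)⁻¹ * (qFactAt q⁻¹ p.2)⁻¹)) • X ^ s := by
        intro p hp
        rw [Finset.HasAntidiagonal.mem_antidiagonal] at hp
        rw [hf]
        simp only [hp]
      rw [Finset.sum_congr rfl h1, ← Finset.sum_smul]
      congr 1
      rw [Finset.Nat.sum_antidiagonal_eq_sum_range_succ_mk]
      rw [← Finset.sum_range_reflect]
      unfold eSum
      apply Finset.sum_congr rfl
      intro m hm
      rw [Finset.mem_range] at hm
      have e1 : s + 1 - 1 - m = s - m := by omega
      have e2 : s - (s - m) = m := by omega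
      simp only [e1, e2]
    rw [step1, ← Finset.sum_subset hsub hzero, hT, Finset.sum_biUnion hdisj,
      Finset.sum_congr rfl inner]
    rw [Finset.sum_eq_single 0]
    · rw [eSum_zero, pow_zero, one_smul]
    · intro b _ hb
      obtain ⟨c, rfl⟩ : ∃ c, b = c + 1 := ⟨b - 1, by omega⟩
      rw [eSum_succ, zero_smul]
    · intro h0
      exact absurd (Finset.mem_range.mpr hN) h0
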